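/- Let K be a division ring, σ an endomorphism of K, δ a σ-derivation of K, and a ∈ K. For every h ∈ R = K[t;σ,δ] and every nonzero x ∈ K, h(T_a)(x) = h(a^x)·x, where T_a(x) = σ(x)a + δ(x) and a^x = σ(x)ax⁻¹ + δ(x)x⁻¹. In particular, h(a) = h(T_a)(1). -/

import Mathlib

/-- In an Ore extension `R = K[t;σ,δ]` over a division ring `K`, for every
`h = Σ bᵢtⁱ ∈ R`, every `a ∈ K` and every nonzero `x ∈ K`,
`h(T_a)(x) = h(a^x)·x`, where `T_a(y) = σ(y)a + δ(y)`, `h(T_a) = Σ bᵢ T_aⁱ`, and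
`a^x = σ(x)ax⁻¹ + δ(x)x⁻¹`.  In particular `h(T_a)(1) = h(a)`. -/
theorem pseudo_linear_evaluation {K R : Type*} [DivisionRing K] [Ring R]
    (ι : K →+* R) (t : R) (σ : K →+* K) (δ : K →+ K)
    (hδ : ∀ a b : K, δ (a * b) = σ a * δ b + δ a * b)
    (hrel : ∀ x : K, t * ι x = ι (σ x) * t + ι (δ x))
    (hbasis : ∀ f : R, ∃! c : ℕ →₀ K, f = c.sum fun i b => ι b * t ^ i)
    (eval : R → K → K)
    (heval : ∀ (f : R) (b : K), ∃ g : R, f - ι (eval f b) = g * (t - ι b))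
    (a : K) (h : R) (c : ℕ →₀ K)
    (hc : h = c.sum fun i b => ι b * t ^ i) :
    (∀ x : K, x ≠ 0 →
      (c.sum fun i b => b * (fun y => σ y * a + δ y)^[i] x) =
        eval h (σ x * a * x⁻¹ + δ x * x⁻¹) * x) ∧
    (c.sum fun i b => b * (fun y => σ y * a + δ y)^[i] 1) = eval h a := by
  classical
  choose rep hrep hrepu using hbasis
  set T : K → K := fun y => σ y * a + δ y with hT
  have hzero : ∀ i : ℕ, ι (0 : K) * t ^ i = 0 := by intro i; simp
  have hrep_single : ∀ (d : K) (j : ℕ), rep (ι d * t ^ j) = Finsupp.single j d := by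
    intro d j
    refine (hrepu _ _ ?_).symm
    show ι d * t ^ j = (Finsupp.single j d).sum fun i b => ι b * t ^ i
    rw [Finsupp.sum_single_index (hzero j)]
  have hrep0 : rep (0 : R) = 0 := by
    refine (hrepu _ _ ?_).symm
    show (0 : R) = (0 : ℕ →₀ K).sum fun i b => ι b * t ^ i
    simp
  have hrepadd : ∀ f g : R, rep (f + g) = rep f + rep g := by
    intro f g
    refine (hrepu _ _ ?_).symm
    show f + g = (rep f + rep g).sum fun i b => ι b * t ^ i
    rw [Finsupp.sum_add_index' (fun i => hzero i)
      (fun i b1 b2 => by rw [map_add, add_mul]), ← hrep f, ← hrep g]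
  let repHom : R →+ (ℕ →₀ K) := AddMonoidHom.mk' rep hrepadd
  have hrepHom : ∀ f : R, repHom f = rep f := fun f => rfl
  -- the additive subgroup spanned by `ι d * t ^ j`, `j ≤ n`
  let S : ℕ → AddSubgroup R := fun n =>
    AddSubgroup.closure {f : R | ∃ d : K, ∃ j ≤ n, f = ι d * t ^ j}
  have hSmono : ∀ ⦃i n : ℕ⦄, i ≤ n → S i ≤ S n := by
    intro i n hin
    refine AddSubgroup.closure_mono ?_
    rintro f ⟨d, j, hj, rfl⟩
    exact ⟨d, j, hj.trans hin, rfl⟩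
  have hSrep : ∀ (n : ℕ) (f : R), f ∈ S n → ∀ j, n < j → rep f j = 0 := by
    intro n f hf j hj
    have hle : S n ≤ AddSubgroup.comap ((Finsupp.applyAddHom j).comp repHom) ⊥ := by
      refine (AddSubgroup.closure_le _).mpr ?_
      rintro f ⟨d, k, hk, rfl⟩
      simp only [SetLike.mem_coe, AddSubgroup.mem_comap, AddMonoidHom.coe_comp,
        Function.comp_apply, AddSubgroup.mem_bot, Finsupp.applyAddHom_apply, hrepHom,
        hrep_single]
      rw [Finsupp.single_apply, if_neg (by omega)]
    have := hle hf
    simp [AddSubgroup.mem_comap, AddSubgroup.mem_bot, hrepHom] at this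
    exact this
  have hSmul : ∀ (n : ℕ) (d : K) (f : R), f ∈ S n → ι d * f ∈ S n := by
    intro n d f hf
    induction hf using AddSubgroup.closure_induction with
    | mem x hx =>
      obtain ⟨e, j, hj, rfl⟩ := hx
      exact AddSubgroup.subset_closure ⟨d * e, j, hj, by rw [map_mul, mul_assoc]⟩
    | zero => simpa using (S n).zero_mem
    | add x y _ _ hx hy => rw [mul_add]; exact (S n).add_mem hx hy
    | neg x _ hx => rw [mul_neg]; exact (S n).neg_mem hx
  have hSt : ∀ (n : ℕ) (f : R), f ∈ S n → t * f ∈ S (n + 1) := by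
    intro n f hf
    induction hf using AddSubgroup.closure_induction with
    | mem x hx =>
      obtain ⟨e, j, hj, rfl⟩ := hx
      have : t * (ι e * t ^ j) = ι (σ e) * t ^ (j + 1) + ι (δ e) * t ^ j := by
        rw [← mul_assoc, hrel, add_mul, mul_assoc, ← pow_succ']
      rw [this]
      exact (S (n + 1)).add_mem
        (AddSubgroup.subset_closure ⟨σ e, j + 1, by omega, rfl⟩)
        (AddSubgroup.subset_closure ⟨δ e, j, by omega, rfl⟩)
    | zero => simpa using (S (n + 1)).zero_mem
    | add x y _ _ hx hy => rw [mul_add]; exact (S (n + 1)).add_mem hx hy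
    | neg x _ hx => rw [mul_neg]; exact (S (n + 1)).neg_mem hx
  have hpowS : ∀ (i : ℕ) (b : K), t ^ i * ι b ∈ S i := by
    intro i b
    induction i with
    | zero => exact AddSubgroup.subset_closure ⟨b, 0, le_refl _, by simp⟩
    | succ i ih =>
      have : t ^ (i + 1) * ι b = t * (t ^ i * ι b) := by rw [pow_succ', mul_assoc]
      rw [this]; exact hSt i _ ih
  -- only `0` among constants is a right multiple of `t - ι b`
  have hconst : ∀ (b c' : K) (g : R), g * (t - ι b) = ι c' → c' = 0 := by
    intro b c' g hg
    by_cases hg0 : g = 0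
    · subst hg0
      rw [zero_mul] at hg
      have h1 : Finsupp.single 0 c' = rep (0 : R) := by
        rw [← hg.symm] at *
        rw [← hrep_single c' 0]
        congr 1
        simpa using hg.symm
      rw [hrep0] at h1
      have := DFunLike.congr_fun h1 0
      simpa using this
    · exfalso
      have hd : rep g ≠ 0 := by
        intro h0
        apply hg0
        rw [hrep g, h0, Finsupp.sum_zero_index]
      set d := rep g with hdd
      have hne : d.support.Nonempty := Finsupp.support_nonempty_iff.mpr hd
      set n := d.support.max' hne with hn
      -- coefficient of degree n+1 in g * t is d n
      have key1 : rep (g * t) (n + 1) = d n := by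
        have e1 : g * t = ∑ i ∈ d.support, ι (d i) * t ^ (i + 1) := by
          conv_lhs => rw [hrep g]
          rw [Finsupp.sum, Finset.sum_mul]
          exact Finset.sum_congr rfl fun i _ => by rw [mul_assoc, ← pow_succ]
        rw [e1, ← hrepHom, map_sum]
        have e2 : ∀ i ∈ d.support,
            (repHom (ι (d i) * t ^ (i + 1))) (n + 1) =
              if n = i then d i else 0 := by
          intro i _
          rw [hrepHom, hrep_single, Finsupp.single_apply]
          by_cases hni : n = i
          · simp [hni]
          · rw [if_neg (by omega), if_neg hni]
        rw [Finsupp.finset_sum_apply, Finset.sum_congr rfl e2, Finset.sum_ite_eq,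
          if_pos (d.support.max'_mem hne)]
      have key2 : rep (g * ι b) (n + 1) = 0 := by
        have e1 : g * ι b = ∑ i ∈ d.support, ι (d i) * (t ^ i * ι b) := by
          conv_lhs => rw [hrep g]
          rw [Finsupp.sum, Finset.sum_mul]
          exact Finset.sum_congr rfl fun i _ => by rw [mul_assoc]
        have hmem : g * ι b ∈ S n := by
          rw [e1]
          exact AddSubgroup.sum_mem _ fun i hi =>
            hSmul n _ _ (hSmono (d.support.le_max' i hi) (hpowS i b))
        exact hSrep n _ hmem (n + 1) (by omega)
      have key3 : rep (g * (t - ι b)) (n + 1) = d n := by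
        have : g * (t - ι b) = g * t - g * ι b := by rw [mul_sub]
        rw [this, ← hrepHom, map_sub, Finsupp.sub_apply, hrepHom, hrepHom, key1, key2,
          sub_zero]
      have hconst' : rep (ι c') = Finsupp.single 0 c' := by
        have := hrep_single c' 0
        rwa [pow_zero, mul_one] at this
      rw [hg, hconst', Finsupp.single_apply, if_neg (by omega)] at key3
      exact (d.support.max'_mem hne) |> fun hmem =>
        (Finsupp.mem_support_iff.mp hmem) key3.symm
  -- the right ideal generated by t - ι a, as an additive subgroup
  let D : AddSubgroup R := (AddMonoidHom.mulRight (t - ι a)).range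
  have hDmem : ∀ f : R, f ∈ D ↔ ∃ g : R, g * (t - ι a) = f := by
    intro f
    constructor
    · rintro ⟨g, rfl⟩; exact ⟨g, rfl⟩
    · rintro ⟨g, rfl⟩; exact ⟨g, rfl⟩
  have hDmul : ∀ (u f : R), f ∈ D → u * f ∈ D := by
    intro u f hf
    obtain ⟨g, rfl⟩ := (hDmem f).mp hf
    exact (hDmem _).mpr ⟨u * g, by rw [mul_assoc]⟩
  -- iterates of T
  have hiter : ∀ (i : ℕ) (x : K), t ^ i * ι x - ι (T^[i] x) ∈ D := by
    intro i x
    induction i with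
    | zero => exact (hDmem _).mpr ⟨0, by simp⟩
    | succ i ih =>
      obtain ⟨g, hg⟩ := (hDmem _).mp ih
      refine (hDmem _).mpr ⟨ι (σ (T^[i] x)) + t * g, ?_⟩
      have e1 : t ^ (i + 1) * ι x = t * (t ^ i * ι x) := by rw [pow_succ', mul_assoc]
      have e2 : t ^ i * ι x = ι (T^[i] x) + g * (t - ι a) := by
        exact sub_eq_iff_eq_add'.mp hg.symm
      have e3 : T^[i + 1] x = σ (T^[i] x) * a + δ (T^[i] x) := by
        rw [Function.iterate_succ_apply']
      rw [e1, e2, e3, mul_add, hrel, map_add, map_mul]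
      noncomm_ring
  -- evaluation at a^x
  have main : ∀ x : K, x ≠ 0 →
      (c.sum fun i b => b * T^[i] x) = eval h (σ x * a * x⁻¹ + δ x * x⁻¹) * x := by
    intro x hx
    set b := σ x * a * x⁻¹ + δ x * x⁻¹ with hb
    set e := eval h b with he
    -- h * ι x - ι (Σ cᵢ T^[i] x) ∈ D
    have step1 : h * ι x - ι (c.sum fun i bb => bb * T^[i] x) ∈ D := by
      have e1 : h * ι x = ∑ i ∈ c.support, ι (c i) * (t ^ i * ι x) := by
        conv_lhs => rw [hc]
        rw [Finsupp.sum, Finset.sum_mul]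
        exact Finset.sum_congr rfl fun i _ => by rw [mul_assoc]
      have e2 : ι (c.sum fun i bb => bb * T^[i] x) =
          ∑ i ∈ c.support, ι (c i) * ι (T^[i] x) := by
        rw [Finsupp.sum, map_sum]
        exact Finset.sum_congr rfl fun i _ => by rw [map_mul]
      rw [e1, e2, ← Finset.sum_sub_distrib]
      exact AddSubgroup.sum_mem _ fun i _ => by
        have := hDmul (ι (c i)) _ (hiter i x)
        rwa [mul_sub] at this
    -- h * ι x - ι (e * x) ∈ D
    have step2 : h * ι x - ι (e * x) ∈ D := by
      obtain ⟨g, hg⟩ := heval h b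
      have e1 : (t - ι b) * ι x = ι (σ x) * (t - ι a) := by
        have hbx : b * x = σ x * a + δ x := by
          rw [hb, add_mul, mul_assoc (σ x * a), mul_assoc (δ x),
            inv_mul_cancel₀ hx, mul_one, mul_one]
        have h2 : ι (b * x) = ι (σ x) * ι a + ι (δ x) := by rw [hbx, map_add, map_mul]
        rw [sub_mul, hrel, ← map_mul, h2]
        noncomm_ring
      have e2 : h * ι x - ι (e * x) = g * ((t - ι b) * ι x) := by
        rw [← mul_assoc, ← hg, sub_mul, map_mul]
      rw [e2, e1]
      exact hDmul g _ ((hDmem _).mpr ⟨ι (σ x), rfl⟩)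
    have step3 : ι ((c.sum fun i bb => bb * T^[i] x) - e * x) ∈ D := by
      have : ι ((c.sum fun i bb => bb * T^[i] x) - e * x) =
          (h * ι x - ι (e * x)) - (h * ι x - ι (c.sum fun i bb => bb * T^[i] x)) := by
        rw [map_sub]; abel
      rw [this]
      exact D.sub_mem step2 step1
    obtain ⟨g, hg⟩ := (hDmem _).mp step3
    have := hconst a _ g hg
    exact sub_eq_zero.mp this
  refine ⟨main, ?_⟩
  have hδ1 : δ 1 = 0 := by
    have h0 := hδ 1 1
    rw [mul_one, map_one σ, one_mul, mul_one] at h0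
    exact left_eq_add.mp h0
  have h1 := main 1 one_ne_zero
  simpa [hδ1] using h1
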